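/- For all real numbers x, y with 0 ≤ x ≤ y ≤ ℓ, the probability that the random interval [I, S] contains the whole segment [x, y] equals (r/(2ℓ))·(2e^{−(y−x)/r} − e^{−2(ℓ−x)/r} − e^{−2y/r}). -/

import Mathlib

open MeasureTheory ProbabilityTheory

/-- The uniform probability measure on `[0,ℓ]` (normalized Lebesgue measure). -/
noncomputable def unifMeasure (ℓ : ℝ) : Measure ℝ :=
  ProbabilityTheory.cond volume (Set.Icc 0 ℓ)

open Real Set

lemma expMeasure_Ici_aux {c : ℝ} (hc : 0 ≤ c) :
    expMeasure 1 (Set.Ici c) = ENNReal.ofReal (Real.exp (-c)) := by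
  rw [expMeasure, gammaMeasure, withDensity_apply _ measurableSet_Ici,
    setLIntegral_congr (Ioi_ae_eq_Ici' (measure_singleton c)).symm,
    setLIntegral_congr_fun measurableSet_Ioi
      (fun a (ha : c < a) => by
        rw [show gammaPDF 1 1 a = exponentialPDF 1 a from rfl,
          exponentialPDF_of_nonneg (le_of_lt (lt_of_le_of_lt hc ha)), one_mul, one_mul]),
    ← ofReal_integral_eq_lintegral_ofReal
      (by simpa [IntegrableOn] using exp_neg_integrableOn_Ioi c one_pos)
      (ae_of_all _ fun a => (exp_pos _).le),
    integral_exp_neg_Ioi]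

lemma integral_exp_aux1 {r : ℝ} (hr : 0 < r) (a b c : ℝ) :
    ∫ u in a..b, Real.exp (-(2 / r) * (c - u))
      = r / 2 * Real.exp (-(2 / r) * (c - b)) - r / 2 * Real.exp (-(2 / r) * (c - a)) := by
  have h : ∀ u : ℝ, HasDerivAt (fun v => r / 2 * Real.exp (-(2 / r) * (c - v)))
      (Real.exp (-(2 / r) * (c - u))) u := by
    intro u
    have h1 : HasDerivAt (fun v : ℝ => -(2 / r) * (c - v)) (2 / r) u := by
      simpa using ((hasDerivAt_id u).const_sub c).const_mul (-(2 / r))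
    have := h1.exp.const_mul (r / 2)
    refine this.congr_deriv ?_
    field_simp [hr.ne']
  exact intervalIntegral.integral_eq_sub_of_hasDerivAt (fun u _ => h u)
    ((by fun_prop : Continuous fun u : ℝ => Real.exp (-(2 / r) * (c - u))).intervalIntegrable a b)

lemma integral_exp_aux2 {r : ℝ} (hr : 0 < r) (a b c : ℝ) :
    ∫ u in a..b, Real.exp (-(2 / r) * (u - c))
      = r / 2 * Real.exp (-(2 / r) * (a - c)) - r / 2 * Real.exp (-(2 / r) * (b - c)) := by
  have h : ∀ u : ℝ, HasDerivAt (fun v => -(r / 2) * Real.exp (-(2 / r) * (v - c)))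
      (Real.exp (-(2 / r) * (u - c))) u := by
    intro u
    have h1 : HasDerivAt (fun v : ℝ => -(2 / r) * (v - c)) (-(2 / r)) u := by
      simpa using ((hasDerivAt_id u).sub_const c).const_mul (-(2 / r))
    have := h1.exp.const_mul (-(r / 2))
    refine this.congr_deriv ?_
    field_simp [hr.ne']
  rw [intervalIntegral.integral_eq_sub_of_hasDerivAt (fun u _ => h u)
    ((by fun_prop : Continuous fun u : ℝ => Real.exp (-(2 / r) * (u - c))).intervalIntegrable a b)]
  ring

/-- Fix `ℓ > 0` and `r > 0`. Let `U` be uniform on `[0,ℓ]` and `E` an independent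
exponential variable with rate 1; set `I = U − (r/2)E` and `S = U + (r/2)E`. For all
`0 ≤ x ≤ y ≤ ℓ`, the probability that `[I,S]` contains the whole segment `[x,y]` equals
`(r/(2ℓ))·(2e^{−(y−x)/r} − e^{−2(ℓ−x)/r} − e^{−2y/r})`. -/
theorem stmt_4 {Ω : Type*} [MeasurableSpace Ω] (μ : Measure Ω) [IsProbabilityMeasure μ]
    (ℓ r : ℝ) (hℓ : 0 < ℓ) (hr : 0 < r)
    (U E : Ω → ℝ) (hU : Measurable U) (hE : Measurable E)
    (hUdist : Measure.map U μ = unifMeasure ℓ)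
    (hEdist : Measure.map E μ = expMeasure 1)
    (hind : IndepFun U E μ)
    (x y : ℝ) (hx : 0 ≤ x) (hxy : x ≤ y) (hyℓ : y ≤ ℓ) :
    μ {ω | Set.Icc x y ⊆ Set.Icc (U ω - r / 2 * E ω) (U ω + r / 2 * E ω)}
      = ENNReal.ofReal ((r / (2 * ℓ)) *
          (2 * Real.exp (-(y - x) / r) - Real.exp (-(2 * (ℓ - x)) / r)
            - Real.exp (-(2 * y) / r))) := by
  haveI : IsProbabilityMeasure (expMeasure 1) := isProbabilityMeasure_expMeasure one_pos
  set A : Set (ℝ × ℝ) := {p | p.1 - r / 2 * p.2 ≤ x ∧ y ≤ p.1 + r / 2 * p.2} with hAdef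
  have hA : MeasurableSet A := by
    apply MeasurableSet.inter
    · exact measurableSet_le (measurable_fst.sub (measurable_const.mul measurable_snd))
        measurable_const
    · exact measurableSet_le measurable_const
        (measurable_fst.add (measurable_const.mul measurable_snd))
  have hset : {ω | Set.Icc x y ⊆ Set.Icc (U ω - r / 2 * E ω) (U ω + r / 2 * E ω)}
      = (fun ω => (U ω, E ω)) ⁻¹' A := by
    ext ω
    simp [A, Set.Icc_subset_Icc_iff hxy]
  have hmax : ∀ u : ℝ, 0 ≤ max (u - x) (y - u) := by
    intro u
    rcases le_total x u with h | h
    · exact le_max_of_le_left (by linarith)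
    · exact le_max_of_le_right (by linarith)
  have hslice : ∀ u : ℝ, Prod.mk u ⁻¹' A = Set.Ici (2 / r * max (u - x) (y - u)) := by
    intro u
    ext e
    simp only [A, Set.mem_preimage, Set.mem_setOf_eq, Set.mem_Ici]
    rw [mul_max_of_nonneg _ _ (by positivity : (0:ℝ) ≤ 2 / r), max_le_iff]
    constructor
    · rintro ⟨h1, h2⟩
      constructor
      · rw [div_mul_eq_mul_div, div_le_iff₀ hr]; linarith
      · rw [div_mul_eq_mul_div, div_le_iff₀ hr]; linarith
    · rintro ⟨h1, h2⟩
      rw [div_mul_eq_mul_div, div_le_iff₀ hr] at h1 h2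
      constructor <;> linarith
  rw [hset, ← Measure.map_apply (hU.prodMk hE) hA,
    (indepFun_iff_map_prod_eq_prod_map_map hU.aemeasurable hE.aemeasurable).mp hind,
    hUdist, hEdist, Measure.prod_apply hA]
  have hcong : ∀ u : ℝ, expMeasure 1 (Prod.mk u ⁻¹' A)
      = ENNReal.ofReal (Real.exp (-(2 / r * max (u - x) (y - u)))) := by
    intro u
    rw [hslice u, expMeasure_Ici_aux (mul_nonneg (by positivity) (hmax u))]
  rw [lintegral_congr hcong]
  have hcont : Continuous fun u : ℝ => Real.exp (-(2 / r * max (u - x) (y - u))) := by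
    fun_prop
  have hrestr : unifMeasure ℓ = (volume (Set.Icc (0:ℝ) ℓ))⁻¹ • volume.restrict (Set.Icc 0 ℓ) := rfl
  rw [hrestr, lintegral_smul_measure,
    ← ofReal_integral_eq_lintegral_ofReal (hcont.integrableOn_Icc)
      (ae_of_all _ fun a => (exp_pos _).le)]
  have hvol : volume (Set.Icc (0:ℝ) ℓ) = ENNReal.ofReal ℓ := by
    rw [Real.volume_Icc, sub_zero]
  -- compute the real integral
  set m : ℝ := (x + y) / 2 with hm
  have hm0 : 0 ≤ m := by rw [hm]; linarith
  have hmℓ : m ≤ ℓ := by rw [hm]; linarith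
  have hI : ∫ u in Set.Icc (0:ℝ) ℓ, Real.exp (-(2 / r * max (u - x) (y - u)))
      = r / 2 * (2 * Real.exp (-(y - x) / r) - Real.exp (-(2 * (ℓ - x)) / r)
          - Real.exp (-(2 * y) / r)) := by
    rw [MeasureTheory.integral_Icc_eq_integral_Ioc,
      ← intervalIntegral.integral_of_le hℓ.le,
      ← intervalIntegral.integral_add_adjacent_intervals
        (a := 0) (b := m) (c := ℓ)
        (hcont.intervalIntegrable 0 m) (hcont.intervalIntegrable m ℓ)]
    have h1 : ∫ u in (0:ℝ)..m, Real.exp (-(2 / r * max (u - x) (y - u)))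
        = ∫ u in (0:ℝ)..m, Real.exp (-(2 / r) * (y - u)) := by
      apply intervalIntegral.integral_congr
      intro u hu
      rw [Set.uIcc_of_le hm0] at hu
      have hmx : max (u - x) (y - u) = y - u := max_eq_right (by
        have := hu.2; rw [hm] at this; linarith)
      show Real.exp (-(2 / r * max (u - x) (y - u))) = Real.exp (-(2 / r) * (y - u))
      rw [hmx, neg_mul]
    have h2 : ∫ u in m..ℓ, Real.exp (-(2 / r * max (u - x) (y - u)))
        = ∫ u in m..ℓ, Real.exp (-(2 / r) * (u - x)) := by
      apply intervalIntegral.integral_congr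
      intro u hu
      rw [Set.uIcc_of_le hmℓ] at hu
      have hmx : max (u - x) (y - u) = u - x := max_eq_left (by
        have := hu.1; rw [hm] at this; linarith)
      show Real.exp (-(2 / r * max (u - x) (y - u))) = Real.exp (-(2 / r) * (u - x))
      rw [hmx, neg_mul]
    rw [h1, h2, integral_exp_aux1 hr, integral_exp_aux2 hr]
    have hrne : r ≠ 0 := hr.ne'
    have e1 : -(2 / r) * (y - m) = -(y - x) / r := by rw [hm]; field_simp; ring
    have e2 : -(2 / r) * (y - 0) = -(2 * y) / r := by field_simp; ring
    have e3 : -(2 / r) * (m - x) = -(y - x) / r := by rw [hm]; field_simp; ring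
    have e4 : -(2 / r) * (ℓ - x) = -(2 * (ℓ - x)) / r := by field_simp
    rw [e1, e2, e3, e4]
    ring
  rw [hI, hvol, ← ENNReal.ofReal_inv_of_pos hℓ,
    smul_eq_mul, ← ENNReal.ofReal_mul (by positivity)]
  congr 1
  rw [← mul_assoc, inv_mul_eq_div, div_div]
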